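/- Let f : ℝ^d × ℝ → ℝ^d satisfy ‖f(x₁,u) − f(x₂,u)‖ ≤ C₁‖x₁ − x₂‖ and ‖f(x,u₁) − f(x,u₂)‖ ≤ C₁|u₁ − u₂| for a constant C₁ > 0. Let a = t₀ < t₁ < ⋯ < t_M = b be a partition with step sizes h_n = t_{n+1} − t_n and h = max_n h_n. Let x, x̃ : [a,b] → ℝ^d be differentiable with x'(t) = f(x(t), u(t)), x̃'(t) = f(x̃(t), u_m(t)), and x(a) = x̃(a), where the continuous inputs satisfy sup_{s ∈ [t_n, t_{n+1}]} |u(s) − u_m(s)| ≤ κ_n for each n. Define ē = max_n C₁ h_n κ_n e^{C₁ h_n} and C̄ = e^{C₁ h}. Then for every n ≤ M: ‖x(t_n) − x̃(t_n)‖ ≤ ((1 − C̄^n)/(1 − C̄)) ē, i.e., ‖x(t_n) − x̃(t_n)‖ ≤ ((C̄^n − 1)/(C̄ − 1)) ē. -/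
import Mathlib


/-- Lemma 2 of the paper: cumulative error between the exact solution `x` of
`ẋ = f(x, u)` and the solution `x̃` of the approximate system `ẋ̃ = f(x̃, uₘ)`,
started from the same initial condition, over a partition `a = t₀ < ⋯ < t_M = b`:
`‖x(tₙ) − x̃(tₙ)‖ ≤ ((1 − C̄ⁿ)/(1 − C̄)) ē` with `C̄ = e^{C₁ h}`,
`ē = maxₙ C₁ hₙ κₙ e^{C₁ hₙ}`, `h = maxₙ hₙ`. -/
theorem cumulative_input_discretization_error
    {d : ℕ}
    (f : EuclideanSpace ℝ (Fin d) → ℝ → EuclideanSpace ℝ (Fin d))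
    (C₁ : ℝ) (hC₁ : 0 < C₁)
    (hf_lip_state : ∀ (x₁ x₂ : EuclideanSpace ℝ (Fin d)) (u : ℝ),
      ‖f x₁ u - f x₂ u‖ ≤ C₁ * ‖x₁ - x₂‖)
    (hf_lip_input : ∀ (x : EuclideanSpace ℝ (Fin d)) (u₁ u₂ : ℝ),
      ‖f x u₁ - f x u₂‖ ≤ C₁ * |u₁ - u₂|)
    (M : ℕ) (hM : 0 < M)
    (t : ℕ → ℝ) (ht : ∀ n < M, t n < t (n + 1))
    (h : ℝ)
    (hmax : IsGreatest {s : ℝ | ∃ n < M, s = t (n + 1) - t n} h)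
    (x xt : ℝ → EuclideanSpace ℝ (Fin d))
    (u um : ℝ → ℝ)
    (hu_cont : ContinuousOn u (Set.Icc (t 0) (t M)))
    (hum_cont : ContinuousOn um (Set.Icc (t 0) (t M)))
    (hx : ∀ s ∈ Set.Icc (t 0) (t M), HasDerivAt x (f (x s) (u s)) s)
    (hxt : ∀ s ∈ Set.Icc (t 0) (t M), HasDerivAt xt (f (xt s) (um s)) s)
    (hinit : x (t 0) = xt (t 0))
    (κ : ℕ → ℝ)
    (hκ : ∀ n < M, ∀ s ∈ Set.Icc (t n) (t (n + 1)), |u s - um s| ≤ κ n)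
    (ebar : ℝ)
    (hebar : IsGreatest
      {e : ℝ | ∃ n < M,
        e = C₁ * (t (n + 1) - t n) * κ n * Real.exp (C₁ * (t (n + 1) - t n))} ebar) :
    ∀ n ≤ M,
      ‖x (t n) - xt (t n)‖ ≤
        ((1 - Real.exp (C₁ * h) ^ n) / (1 - Real.exp (C₁ * h))) * ebar := by
  set c : ℝ := Real.exp (C₁ * h) with hc_def
  obtain ⟨n₀, hn₀M, hn₀⟩ := hmax.1
  have hh_pos : 0 < h := by
    have h1 := ht n₀ hn₀M
    rw [hn₀]; linarith
  have hc1 : 1 < c := by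
    rw [hc_def]
    have hpos : 0 < C₁ * h := by positivity
    calc (1:ℝ) = Real.exp 0 := by simp
    _ < Real.exp (C₁ * h) := Real.exp_lt_exp.mpr hpos
  have hc0 : 0 < c := by linarith
  -- monotonicity of the partition
  have tmono : ∀ j ≤ M, ∀ i ≤ j, t i ≤ t j := by
    intro j
    induction j with
    | zero => intro _ i hi; interval_cases i; exact le_refl _
    | succ j ih =>
      intro hj i hi
      rcases Nat.lt_or_ge i (j+1) with hlt | hge
      · have hij : i ≤ j := by omega
        have h1 := ih (by omega) i hij
        have h2 := ht j (by omega)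
        linarith
      · have hieq : i = j + 1 := by omega
        rw [hieq]
  -- κ nonneg
  have hκ0 : ∀ n < M, 0 ≤ κ n := by
    intro n hn
    exact le_trans (abs_nonneg _) (hκ n hn (t n) ⟨le_refl _, (ht n hn).le⟩)
  -- ebar nonneg
  have hebar0 : 0 ≤ ebar := by
    obtain ⟨m, hmM, hm⟩ := hebar.1
    have h1 := (ht m hmM)
    have h2 := hκ0 m hmM
    rw [hm]
    have h3 : (0:ℝ) < Real.exp (C₁ * (t (m+1) - t m)) := Real.exp_pos _
    have h4 : 0 ≤ C₁ * (t (m+1) - t m) := mul_nonneg hC₁.le (by linarith)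
    exact mul_nonneg (mul_nonneg h4 h2) h3.le
  -- single-step estimate
  have step : ∀ n < M,
      ‖x (t (n+1)) - xt (t (n+1))‖ ≤ c * ‖x (t n) - xt (t n)‖ + ebar := by
    intro n hnM
    have hsub : Set.Icc (t n) (t (n+1)) ⊆ Set.Icc (t 0) (t M) :=
      Set.Icc_subset_Icc (tmono n (by omega) 0 (by omega))
        (tmono M le_rfl (n+1) (by omega))
    set g : ℝ → EuclideanSpace ℝ (Fin d) := fun s => x s - xt s with hg_def
    have hderiv : ∀ s ∈ Set.Icc (t n) (t (n+1)),
        HasDerivAt g (f (x s) (u s) - f (xt s) (um s)) s := by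
      intro s hs
      exact (hx s (hsub hs)).sub (hxt s (hsub hs))
    have hcont : ContinuousOn g (Set.Icc (t n) (t (n+1))) := by
      intro s hs
      exact (hderiv s hs).continuousAt.continuousWithinAt
    have hbound : ∀ s ∈ Set.Ico (t n) (t (n+1)),
        ‖f (x s) (u s) - f (xt s) (um s)‖ ≤ C₁ * ‖g s‖ + C₁ * κ n := by
      intro s hs
      have hs' : s ∈ Set.Icc (t n) (t (n+1)) := Set.Ico_subset_Icc_self hs
      calc ‖f (x s) (u s) - f (xt s) (um s)‖
          ≤ ‖f (x s) (u s) - f (xt s) (u s)‖ + ‖f (xt s) (u s) - f (xt s) (um s)‖ := by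
            have heq : f (x s) (u s) - f (xt s) (um s)
                = (f (x s) (u s) - f (xt s) (u s)) + (f (xt s) (u s) - f (xt s) (um s)) := by
              abel
            rw [heq]; exact norm_add_le _ _
        _ ≤ C₁ * ‖g s‖ + C₁ * κ n := by
            have h1 := hf_lip_state (x s) (xt s) (u s)
            have h2 := hf_lip_input (xt s) (u s) (um s)
            have h3 := hκ n hnM s hs'
            have h4 : C₁ * |u s - um s| ≤ C₁ * κ n :=
              mul_le_mul_of_nonneg_left h3 hC₁.le
            exact add_le_add h1 (le_trans h2 h4)
    have hgr := norm_le_gronwallBound_of_norm_deriv_right_le hcont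
      (fun s hs => (hderiv s (Set.Ico_subset_Icc_self hs)).hasDerivWithinAt)
      (le_refl ‖g (t n)‖) hbound (t (n+1))
      ⟨(ht n hnM).le, le_refl _⟩
    rw [gronwallBound_of_K_ne_0 hC₁.ne'] at hgr
    have hhn_pos : 0 < t (n+1) - t n := by linarith [ht n hnM]
    have hhn_le : t (n+1) - t n ≤ h := hmax.2 ⟨n, hnM, rfl⟩
    set z : ℝ := C₁ * (t (n+1) - t n) with hz
    have hz0 : 0 ≤ z := by positivity
    have hexp : Real.exp z - 1 ≤ z * Real.exp z := by
      have h1 := Real.add_one_le_exp (-z)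
      have h2 : Real.exp (-z) = (Real.exp z)⁻¹ := Real.exp_neg z
      have h3 : (0:ℝ) < Real.exp z := Real.exp_pos z
      rw [h2] at h1
      have h4 : (Real.exp z)⁻¹ * Real.exp z = 1 := inv_mul_cancel₀ h3.ne'
      nlinarith
    have hez_le : Real.exp z ≤ c := by
      rw [hc_def, hz]
      exact Real.exp_le_exp.mpr (mul_le_mul_of_nonneg_left hhn_le hC₁.le)
    have hkn0 : 0 ≤ κ n := hκ0 n hnM
    have hterm : C₁ * κ n / C₁ * (Real.exp z - 1) ≤ ebar := by
      have heq : C₁ * κ n / C₁ = κ n := by field_simp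
      rw [heq]
      have h5 : κ n * (Real.exp z - 1) ≤ κ n * (z * Real.exp z) :=
        mul_le_mul_of_nonneg_left hexp hkn0
      have h6 : κ n * (z * Real.exp z) ≤ ebar := by
        have h7 := hebar.2 ⟨n, hnM, rfl⟩
        rw [hz]
        nlinarith [Real.exp_pos (C₁ * (t (n+1) - t n))]
      linarith
    have hδ0 : (0:ℝ) ≤ ‖g (t n)‖ := norm_nonneg _
    have hfinal := hgr
    calc ‖x (t (n+1)) - xt (t (n+1))‖
        = ‖g (t (n+1))‖ := rfl
      _ ≤ ‖g (t n)‖ * Real.exp (C₁ * (t (n+1) - t n))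
            + C₁ * κ n / C₁ * (Real.exp (C₁ * (t (n+1) - t n)) - 1) := hfinal
      _ ≤ c * ‖g (t n)‖ + ebar := by
          have e1 : ‖g (t n)‖ * Real.exp z ≤ c * ‖g (t n)‖ := by
            rw [mul_comm c]
            exact mul_le_mul_of_nonneg_left hez_le hδ0
          rw [hz] at e1
          exact add_le_add e1 hterm
  -- induction
  intro n
  induction n with
  | zero =>
    intro _
    rw [hinit]
    simp
  | succ n ih =>
    intro hn1
    have hnM : n < M := by omega
    have ihn := ih (by omega)
    have hstep := step n hnM
    have hB : c * ((1 - c ^ n) / (1 - c) * ebar) + ebar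
        = (1 - c ^ (n+1)) / (1 - c) * ebar := by
      have hne : 1 - c ≠ 0 := by linarith
      field_simp
      ring
    rw [← hB]
    have hmul : c * ‖x (t n) - xt (t n)‖ ≤ c * ((1 - c ^ n) / (1 - c) * ebar) :=
      mul_le_mul_of_nonneg_left ihn hc0.le
    linarith
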